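/- Let ε > 0 and let A : ℝ → ℝ be a convex function such that A(x) = x for all x ≥ 0 and A(x) = -x - ε for all x ≤ -ε. Define M(x,y) = (x+y)/2 + A((x-y)/2). Then for all x, y ∈ ℝ one has 0 ≤ max(x,y) - M(x,y) ≤ ε. -/

import Mathlib

theorem stmt_3 (ε : ℝ) (hε : 0 < ε) (A : ℝ → ℝ)
    (hA : ConvexOn ℝ Set.univ A)
    (hA1 : ∀ x : ℝ, 0 ≤ x → A x = x)
    (hA2 : ∀ x : ℝ, x ≤ -ε → A x = -x - ε)
    (M : ℝ → ℝ → ℝ) (hM : ∀ x y, M x y = (x + y) / 2 + A ((x - y) / 2)) :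
    ∀ x y : ℝ, 0 ≤ max x y - M x y ∧ max x y - M x y ≤ ε := by
  have key : ∀ t : ℝ, 0 ≤ |t| - A t ∧ |t| - A t ≤ ε := by
    intro t
    rcases le_or_gt 0 t with h0 | h0
    · rw [hA1 t h0, abs_of_nonneg h0]
      constructor <;> linarith
    rcases le_or_gt t (-ε) with h1 | h1
    · rw [hA2 t h1, abs_of_neg h0]
      constructor <;> linarith
    -- -ε < t < 0
    have hA0 : A 0 = 0 := by simpa using hA1 0 le_rfl
    have hAe : A (-ε) = 0 := by rw [hA2 (-ε) le_rfl]; ring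
    have hA2e : A (-(2*ε)) = ε := by rw [hA2 _ (by linarith)]; ring
    -- upper: A t ≤ 0
    have hup : A t ≤ 0 := by
      have ha : (0:ℝ) ≤ -t/ε := div_nonneg (by linarith) hε.le
      have hb : (0:ℝ) ≤ 1 + t/ε := by
        have : -t/ε ≤ 1 := (div_le_one hε).mpr (by linarith)
        rw [neg_div] at this; linarith
      have hab : -t/ε + (1 + t/ε) = 1 := by ring
      have : A ((-t/ε) • (-ε) + (1 + t/ε) • (0:ℝ)) ≤ (-t/ε) • A (-ε) + (1 + t/ε) • A 0 :=
        hA.2 (Set.mem_univ _) (Set.mem_univ _) ha hb hab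
      simp only [smul_eq_mul] at this
      have ht : (-t/ε) * (-ε) + (1 + t/ε) * 0 = t := by field_simp; ring
      rw [ht, hAe, hA0] at this
      linarith
    -- lower: A t ≥ -(t+ε)
    have hden : (0:ℝ) < t + 2*ε := by linarith
    have hlow : -(t + ε) ≤ A t := by
      have ha : (0:ℝ) ≤ (t+ε)/(t+2*ε) := div_nonneg (by linarith) hden.le
      have hb : (0:ℝ) ≤ ε/(t+2*ε) := by positivity
      have hab : (t+ε)/(t+2*ε) + ε/(t+2*ε) = 1 := by
        rw [← add_div]
        rw [div_eq_one_iff_eq hden.ne']; ring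
      have : A (((t+ε)/(t+2*ε)) • (-(2*ε)) + (ε/(t+2*ε)) • t) ≤ ((t+ε)/(t+2*ε)) • A (-(2*ε)) + (ε/(t+2*ε)) • A t :=
        hA.2 (Set.mem_univ _) (Set.mem_univ _) ha hb hab
      simp only [smul_eq_mul, hA2e] at this
      have ht : (t+ε)/(t+2*ε) * (-(2*ε)) + ε/(t+2*ε) * t = -ε := by
        rw [div_mul_eq_mul_div, div_mul_eq_mul_div, ← add_div, div_eq_iff hden.ne']; ring
      rw [ht, hAe] at this
      have e1 : (t+ε)/(t+2*ε) * ε + ε/(t+2*ε) * A t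
          = ((t+ε) * ε + ε * A t) / (t+2*ε) := by
        field_simp
      rw [e1] at this
      have h2 : 0 ≤ (t+ε) * ε + ε * A t := by
        rcases div_nonneg_iff.mp this with ⟨h, _⟩ | ⟨_, h⟩
        · exact h
        · linarith
      nlinarith
    rw [abs_of_neg h0]
    constructor <;> linarith
  intro x y
  have hmax : max x y = (x + y) / 2 + |(x - y) / 2| := by
    rcases le_total x y with h | h
    · rw [max_eq_right h, abs_of_nonpos (by linarith)]; ring
    · rw [max_eq_left h, abs_of_nonneg (by linarith)]; ring
  obtain ⟨k1, k2⟩ := key ((x - y) / 2)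
  rw [hM, hmax]
  constructor <;> linarith
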